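/- Define G : ℝ×(−π/2, π/2) → ℝ² by G(x,y) = (x·cos y, tan y). Then G is a smooth diffeomorphism onto ℝ² mapping {0}×(−π/2,π/2) onto {0}×ℝ, and for every smooth φ : ℝ² → ℂ and every (x,y) in the domain: (1/2)·(x·∂_x(φ∘G)(x,y) + i·∂_y(φ∘G)(x,y)) = (Lφ)(G(x,y)), where for q = (X,Y), (Lφ)(q) := (1/2)·(X·∂_Xφ(q) + i·(−X·Y·∂_Xφ(q) + (1+Y²)·∂_Yφ(q))). Moreover the function p(X,Y) := X + i·X·Y satisfies L p = 0 on ℝ². -/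

import Mathlib

/-!
STATEMENT 17.  `G(x,y) = (x·cos y, tan y)` on `ℝ×(−π/2, π/2)` is a smooth diffeomorphism
onto `ℝ²` mapping `{0}×(−π/2,π/2)` onto `{0}×ℝ`, and for every smooth `φ : ℝ² → ℂ`:
`(1/2)(x∂ₓ(φ∘G) + i∂_y(φ∘G)) = (Lφ)∘G`, where
`(Lφ)(X,Y) = (1/2)(X∂_Xφ + i(−XY∂_Xφ + (1+Y²)∂_Yφ))`, i.e. `G_*(ᵇ∂_z̄) = L`.
Moreover `p(X,Y) = X + iXY` satisfies `Lp = 0` on `ℝ²`.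
-/

/-- `G(x,y) = (x·cos y, tan y)`. -/
noncomputable def Gmap : ℝ × ℝ → ℝ × ℝ := fun p => (p.1 * Real.cos p.2, Real.tan p.2)

/-- The domain `ℝ × (−π/2, π/2)`. -/
noncomputable def Sdom : Set (ℝ × ℝ) :=
  Set.univ ×ˢ Set.Ioo (-(Real.pi / 2)) (Real.pi / 2)

/-- The vector field `L = (1/2)(X∂_X + i(−XY∂_X + (1+Y²)∂_Y))` applied to `φ` at `q`. -/
noncomputable def Lvf (φ : ℝ × ℝ → ℂ) (q : ℝ × ℝ) : ℂ :=
  (1 / 2 : ℂ) * ((q.1 : ℂ) * fderiv ℝ φ q ((1, 0) : ℝ × ℝ)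
    + Complex.I * (-(q.1 : ℂ) * (q.2 : ℂ) * fderiv ℝ φ q ((1, 0) : ℝ × ℝ)
      + (1 + (q.2 : ℂ) ^ 2) * fderiv ℝ φ q ((0, 1) : ℝ × ℝ)))

open ContinuousLinearMap in
lemma Gmap_hasFDerivAt {p : ℝ × ℝ} (hp : p ∈ Sdom) :
    HasFDerivAt Gmap
      ((p.1 • ((-Real.sin p.2) • (snd ℝ ℝ ℝ)) + Real.cos p.2 • (fst ℝ ℝ ℝ)).prod
        ((1 / Real.cos p.2 ^ 2) • (snd ℝ ℝ ℝ))) p := by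
  have hc : Real.cos p.2 ≠ 0 := (Real.cos_pos_of_mem_Ioo hp.2).ne'
  have h1 : HasFDerivAt (fun q : ℝ × ℝ => Real.cos q.2)
      ((-Real.sin p.2) • (snd ℝ ℝ ℝ)) p :=
    (Real.hasDerivAt_cos p.2).comp_hasFDerivAt p (hasFDerivAt_snd)
  have h2 : HasFDerivAt (fun q : ℝ × ℝ => Real.tan q.2)
      ((1 / Real.cos p.2 ^ 2) • (snd ℝ ℝ ℝ)) p :=
    (Real.hasDerivAt_tan hc).comp_hasFDerivAt p (hasFDerivAt_snd)
  exact (HasFDerivAt.prodMk (hasFDerivAt_fst.mul h1) h2 : _)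

/-- The inverse map. -/
noncomputable def Ginv : ℝ × ℝ → ℝ × ℝ :=
  fun q => (q.1 * Real.sqrt (1 + q.2 ^ 2), Real.arctan q.2)

lemma Ginv_mem (q : ℝ × ℝ) : Ginv q ∈ Sdom :=
  ⟨trivial, Real.arctan_mem_Ioo q.2⟩

lemma Gmap_Ginv (q : ℝ × ℝ) : Gmap (Ginv q) = q := by
  have h0 : Real.sqrt (1 + q.2 ^ 2) ≠ 0 := by
    positivity
  simp only [Gmap, Ginv, Real.tan_arctan, Real.cos_arctan]
  rw [Prod.ext_iff]
  constructor
  · field_simp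
  · rfl

lemma Ginv_Gmap {p : ℝ × ℝ} (hp : p ∈ Sdom) : Ginv (Gmap p) = p := by
  have hc : 0 < Real.cos p.2 := Real.cos_pos_of_mem_Ioo hp.2
  have hs : Real.sqrt (1 + Real.tan p.2 ^ 2) = (Real.cos p.2)⁻¹ := by
    rw [← Real.inv_sqrt_one_add_tan_sq hc, inv_inv]
  simp only [Gmap, Ginv, hs, Real.arctan_tan hp.2.1 hp.2.2]
  rw [Prod.ext_iff]
  constructor
  · field_simp
  · rfl

theorem stmt_17 :
    ContDiffOn ℝ (⊤ : ℕ∞) Gmap Sdom ∧ Set.InjOn Gmap Sdom ∧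
    Gmap '' Sdom = Set.univ ∧
    (∃ Ginv : ℝ × ℝ → ℝ × ℝ, ContDiff ℝ (⊤ : ℕ∞) Ginv ∧
      (∀ p ∈ Sdom, Ginv (Gmap p) = p) ∧ (∀ q : ℝ × ℝ, Gmap (Ginv q) = q)) ∧
    Gmap '' (Sdom ∩ {p : ℝ × ℝ | p.1 = 0}) = {q : ℝ × ℝ | q.1 = 0} ∧
    (∀ φ : ℝ × ℝ → ℂ, ContDiff ℝ (⊤ : ℕ∞) φ → ∀ p ∈ Sdom,
      (1 / 2 : ℂ) * ((p.1 : ℂ) * fderiv ℝ (φ ∘ Gmap) p ((1, 0) : ℝ × ℝ)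
          + Complex.I * fderiv ℝ (φ ∘ Gmap) p ((0, 1) : ℝ × ℝ))
        = Lvf φ (Gmap p)) ∧
    (∀ q : ℝ × ℝ, Lvf (fun w : ℝ × ℝ => (w.1 : ℂ) + Complex.I * ((w.1 : ℂ) * (w.2 : ℂ))) q = 0) := by
  refine ⟨?_, ?_, ?_, ?_, ?_, ?_, ?_⟩
  · -- smoothness of Gmap on Sdom
    intro p hp
    have hc : Real.cos p.2 ≠ 0 := (Real.cos_pos_of_mem_Ioo hp.2).ne'
    refine ContDiffAt.contDiffWithinAt ?_
    exact ContDiffAt.prodMk (contDiffAt_fst.mul (Real.contDiff_cos.contDiffAt.comp p contDiffAt_snd))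
      ((Real.contDiffAt_tan.2 hc).comp p contDiffAt_snd)
  · -- injectivity
    intro p hp q hq h
    have h2 : p.2 = q.2 := Real.injOn_tan hp.2 hq.2 (congrArg Prod.snd h)
    have h1 : p.1 * Real.cos p.2 = q.1 * Real.cos q.2 := congrArg Prod.fst h
    have hc : Real.cos p.2 ≠ 0 := (Real.cos_pos_of_mem_Ioo hp.2).ne'
    rw [← h2] at h1
    exact Prod.ext (mul_right_cancel₀ hc h1) h2
  · -- surjectivity
    ext q
    simp only [Set.mem_univ, iff_true]
    exact ⟨Ginv q, Ginv_mem q, Gmap_Ginv q⟩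
  · -- smooth inverse
    refine ⟨Ginv, ?_, fun p hp => Ginv_Gmap hp, Gmap_Ginv⟩
    refine ContDiff.prodMk ?_ (Real.contDiff_arctan.comp contDiff_snd)
    refine contDiff_fst.mul ?_
    rw [contDiff_iff_contDiffAt]
    intro q
    refine ContDiffAt.sqrt ?_ (by positivity)
    exact (contDiffAt_const.add ((contDiffAt_snd).pow 2))
  · -- image of the slice
    ext q
    constructor
    · rintro ⟨p, ⟨hp, hp0⟩, rfl⟩
      simp only [Set.mem_setOf_eq, Gmap]
      simp only [Set.mem_setOf_eq] at hp0
      simp [hp0]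
    · intro hq
      refine ⟨(0, Real.arctan q.2), ⟨⟨trivial, Real.arctan_mem_Ioo q.2⟩, rfl⟩, ?_⟩
      simp only [Gmap, Real.tan_arctan, zero_mul]
      exact Prod.ext hq.symm rfl
  · -- the pushforward identity
    intro φ hφ p hp
    have hc : Real.cos p.2 ≠ 0 := (Real.cos_pos_of_mem_Ioo hp.2).ne'
    have hG := Gmap_hasFDerivAt hp
    have hφd : DifferentiableAt ℝ φ (Gmap p) := (hφ.differentiable (by simp)).differentiableAt
    have hcomp := (hφd.hasFDerivAt).comp p hG
    rw [hcomp.fderiv]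
    set A := fderiv ℝ φ (Gmap p) ((1, 0) : ℝ × ℝ) with hA
    set B := fderiv ℝ φ (Gmap p) ((0, 1) : ℝ × ℝ) with hB
    have expand : ∀ a b : ℝ, fderiv ℝ φ (Gmap p) ((a, b) : ℝ × ℝ) = a • A + b • B := by
      intro a b
      have : ((a, b) : ℝ × ℝ) = a • ((1 : ℝ), (0 : ℝ)) + b • ((0 : ℝ), (1 : ℝ)) := by
        simp [Prod.ext_iff]
      rw [this, map_add, map_smul, map_smul]
    simp only [ContinuousLinearMap.comp_apply, ContinuousLinearMap.prod_apply,
      ContinuousLinearMap.add_apply, ContinuousLinearMap.smul_apply,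
      ContinuousLinearMap.coe_fst', ContinuousLinearMap.coe_snd',
      smul_eq_mul, mul_zero, mul_one, add_zero, zero_add]
    rw [expand, expand]
    simp only [Lvf, ← hA, ← hB]
    rw [show ((Gmap p).1 : ℝ) = p.1 * Real.cos p.2 from rfl,
      show ((Gmap p).2 : ℝ) = Real.tan p.2 from rfl]
    have hsin : ((Real.sin p.2 : ℝ) : ℂ) = (Real.tan p.2 : ℂ) * (Real.cos p.2 : ℂ) := by
      exact_mod_cast congrArg Complex.ofReal (Real.tan_mul_cos hc).symm
    have htan : (1 : ℂ) / ((Real.cos p.2 : ℝ) : ℂ) ^ 2 = 1 + ((Real.tan p.2 : ℝ) : ℂ) ^ 2 := by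
      have := Real.inv_one_add_tan_sq hc
      have h2 : ((1 : ℝ) + Real.tan p.2 ^ 2)⁻¹ = Real.cos p.2 ^ 2 := this
      have hcc : ((Real.cos p.2 : ℝ) : ℂ) ^ 2 ≠ 0 := by
        exact_mod_cast pow_ne_zero 2 (by exact_mod_cast hc : ((Real.cos p.2 : ℝ) : ℂ) ≠ 0)
      field_simp
      exact_mod_cast congrArg (fun t : ℝ => ((t : ℂ))) (by field_simp at h2 ⊢; linarith [h2] : (1 : ℝ) + Real.tan p.2 ^ 2 = 1 / Real.cos p.2 ^ 2).symm
    simp only [Complex.real_smul]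
    push_cast [-Complex.ofReal_cos, -Complex.ofReal_sin, -Complex.ofReal_tan]
    rw [hsin, htan]
    ring
  · -- L p = 0 for p = X + iXY
    intro q
    set f : ℝ × ℝ → ℂ := fun w => (w.1 : ℂ) + Complex.I * ((w.1 : ℂ) * (w.2 : ℂ)) with hf
    have h1 : HasFDerivAt (fun w : ℝ × ℝ => ((w.1 : ℝ) : ℂ))
        (Complex.ofRealCLM.comp (ContinuousLinearMap.fst ℝ ℝ ℝ)) q :=
      Complex.ofRealCLM.hasFDerivAt.comp q hasFDerivAt_fst
    have h2 : HasFDerivAt (fun w : ℝ × ℝ => ((w.2 : ℝ) : ℂ))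
        (Complex.ofRealCLM.comp (ContinuousLinearMap.snd ℝ ℝ ℝ)) q :=
      Complex.ofRealCLM.hasFDerivAt.comp q hasFDerivAt_snd
    have hm := h1.mul h2
    have hfd : HasFDerivAt f
        ((Complex.ofRealCLM.comp (ContinuousLinearMap.fst ℝ ℝ ℝ)) +
          Complex.I • ((q.1 : ℂ) • (Complex.ofRealCLM.comp (ContinuousLinearMap.snd ℝ ℝ ℝ))
            + (q.2 : ℂ) • (Complex.ofRealCLM.comp (ContinuousLinearMap.fst ℝ ℝ ℝ)))) q :=
      h1.add (hm.const_mul Complex.I)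
    rw [Lvf, hfd.fderiv]
    simp only [ContinuousLinearMap.add_apply, ContinuousLinearMap.smul_apply,
      ContinuousLinearMap.comp_apply, ContinuousLinearMap.coe_fst',
      ContinuousLinearMap.coe_snd', Complex.ofRealCLM_apply, smul_eq_mul]
    push_cast
    ring_nf
    linear_combination ((q.1 : ℂ) / 2) * Complex.I_sq
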